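/- Let B ∈ ℂ^{m×n}, W ∈ ℂ^{n×m}, let k be a natural number with k = ind(BW), let H be the Moore–Penrose inverse of B, and let X be a minimal rank W-weighted weak Drazin inverse of B. Then Y = H·B·W·X·W is the unique matrix Y ∈ ℂ^{n×m} such that B·Y is idempotent with col(B·Y) = col((B·W)^k) and N(B·Y) = N(X·W), and col(Y) ⊆ col(B^*). -/
import Mathlib


open Matrix

/-- The index of a square complex matrix: the least `j` with `rank (M^j) = rank (M^(j+1))`. -/
noncomputable def matIndex {p : ℕ} (M : Matrix (Fin p) (Fin p) ℂ) : ℕ :=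
  sInf {j : ℕ | (M ^ j).rank = (M ^ (j + 1)).rank}

/-- The column space of a complex matrix: the range of `v ↦ M *ᵥ v`. -/
noncomputable def colSpace {a b : ℕ} (M : Matrix (Fin a) (Fin b) ℂ) :
    Submodule ℂ (Fin a → ℂ) :=
  LinearMap.range M.mulVecLin

/-- The null space of a complex matrix: the kernel of `v ↦ M *ᵥ v`. -/
noncomputable def nullSpace {a b : ℕ} (M : Matrix (Fin a) (Fin b) ℂ) :
    Submodule ℂ (Fin b → ℂ) :=
  LinearMap.ker M.mulVecLin

/-- Two matrices that act identically on vectors are equal. -/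
lemma mulVec_ext_aux {a b : ℕ} {M N : Matrix (Fin a) (Fin b) ℂ}
    (h : ∀ v, M *ᵥ v = N *ᵥ v) : M = N := by
  ext i j
  have := congrFun (h (Pi.single j 1)) i
  simpa using this

lemma mem_colSpace_aux {a b : ℕ} {M : Matrix (Fin a) (Fin b) ℂ} {x : Fin a → ℂ} :
    x ∈ colSpace M ↔ ∃ v, M *ᵥ v = x := by
  simp [colSpace, LinearMap.mem_range, Matrix.mulVecLin_apply]

lemma mem_nullSpace_aux {a b : ℕ} {M : Matrix (Fin a) (Fin b) ℂ} {v : Fin b → ℂ} :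
    v ∈ nullSpace M ↔ M *ᵥ v = 0 := by
  simp [nullSpace, LinearMap.mem_ker, Matrix.mulVecLin_apply]

lemma colSpace_mul_le_aux {a b c : ℕ} (A : Matrix (Fin a) (Fin b) ℂ)
    (C : Matrix (Fin b) (Fin c) ℂ) : colSpace (A * C) ≤ colSpace A := by
  intro x hx
  obtain ⟨v, rfl⟩ := mem_colSpace_aux.mp hx
  exact mem_colSpace_aux.mpr ⟨C *ᵥ v, by rw [Matrix.mulVec_mulVec]⟩

lemma finrank_colSpace_aux {a b : ℕ} (M : Matrix (Fin a) (Fin b) ℂ) :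
    Module.finrank ℂ (colSpace M) = M.rank := rfl

/-- Idempotent matrices with the same column space and null space are equal. -/
lemma idem_eq_aux {a : ℕ} {E F : Matrix (Fin a) (Fin a) ℂ}
    (hE : E * E = E) (hF : F * F = F)
    (hcol : colSpace E = colSpace F) (hnull : nullSpace E = nullSpace F) :
    E = F := by
  apply mulVec_ext_aux
  intro v
  -- F *ᵥ v ∈ colSpace F = colSpace E
  obtain ⟨u, hu⟩ : ∃ u, E *ᵥ u = F *ᵥ v :=
    mem_colSpace_aux.mp (hcol ▸ mem_colSpace_aux.mpr ⟨v, rfl⟩)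
  have hEfix : E *ᵥ (F *ᵥ v) = F *ᵥ v := by
    rw [← hu, Matrix.mulVec_mulVec, hE]
  have hker : E *ᵥ (v - F *ᵥ v) = 0 := by
    have h1 : F *ᵥ (v - F *ᵥ v) = 0 := by
      rw [Matrix.mulVec_sub, Matrix.mulVec_mulVec, hF, sub_self]
    have h2 : (v - F *ᵥ v) ∈ nullSpace F := mem_nullSpace_aux.mpr h1
    exact mem_nullSpace_aux.mp (hnull ▸ h2)
  have hsplit : E *ᵥ v = E *ᵥ (F *ᵥ v) + E *ᵥ (v - F *ᵥ v) := by
    rw [← Matrix.mulVec_add]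
    have h : F *ᵥ v + (v - F *ᵥ v) = v := by abel
    rw [h]
  rw [hsplit, hEfix, hker, add_zero]

/-- **Theorem 3.8.** `Y = H·B·W·X·W` is the unique matrix such that `B·Y` is the projector
`P_{col((BW)^k), N(XW)}` and `col(Y) ⊆ col(Bᴴ)`. -/
theorem weighted_weak_MPD_unique_projector {m n : ℕ}
    (B : Matrix (Fin m) (Fin n) ℂ) (W : Matrix (Fin n) (Fin m) ℂ)
    (k : ℕ) (hk : k = matIndex (B * W))
    (H : Matrix (Fin n) (Fin m) ℂ)
    (hH1 : B * H * B = B) (hH2 : H * B * H = H)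
    (hH3 : (B * H)ᴴ = B * H) (hH4 : (H * B)ᴴ = H * B)
    (X : Matrix (Fin m) (Fin n) ℂ)
    (hX1 : X * W * (B * W) ^ (k + 1) = (B * W) ^ k)
    (hX2 : X.rank = ((B * W) ^ k).rank) :
    ∀ Y : Matrix (Fin n) (Fin m) ℂ,
      ((B * Y) * (B * Y) = B * Y ∧
        colSpace (B * Y) = colSpace ((B * W) ^ k) ∧
        nullSpace (B * Y) = nullSpace (X * W) ∧
        colSpace Y ≤ colSpace Bᴴ) ↔
      Y = H * B * W * X * W := by
  set P : Matrix (Fin m) (Fin m) ℂ := B * W with hP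
  set S : Matrix (Fin m) (Fin m) ℂ := X * W with hS
  -- index fact: rank (P^k) = rank (P^(k+1))
  have hne : {j : ℕ | (P ^ j).rank = (P ^ (j + 1)).rank}.Nonempty := by
    by_contra hemp
    have hall : ∀ j, (P ^ j).rank ≠ (P ^ (j + 1)).rank := by
      intro j hj
      exact hemp ⟨j, hj⟩
    have hdec : ∀ j, (P ^ (j + 1)).rank < (P ^ j).rank := by
      intro j
      have hle : (P ^ (j + 1)).rank ≤ (P ^ j).rank := by
        rw [pow_succ]
        exact Matrix.rank_mul_le_left _ _
      exact lt_of_le_of_ne hle (fun h => hall j h.symm)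
    have hbound : ∀ j, (P ^ j).rank + j ≤ (P ^ 0).rank := by
      intro j
      induction j with
      | zero => simp
      | succ i ih => have := hdec i; omega
    have := hbound ((P ^ 0).rank + 1)
    omega
  have hkrank : (P ^ k).rank = (P ^ (k + 1)).rank := by
    have hmem := Nat.sInf_mem hne
    have : matIndex P ∈ {j : ℕ | (P ^ j).rank = (P ^ (j + 1)).rank} := hmem
    rw [hk]
    exact this
  -- col (P^(k+1)) = col (P^k)
  have hcolP1 : colSpace (P ^ (k + 1)) = colSpace (P ^ k) := by
    have hle : colSpace (P ^ (k + 1)) ≤ colSpace (P ^ k) := by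
      rw [pow_succ]
      exact colSpace_mul_le_aux _ _
    refine Submodule.eq_of_le_of_finrank_le hle ?_
    rw [finrank_colSpace_aux, finrank_colSpace_aux]
    exact le_of_eq hkrank
  -- S * P^(k+1) = P^k
  have hSP : S * P ^ (k + 1) = P ^ k := hX1
  -- col (P^k) ≤ col S and equality
  have hcolPk_le_S : colSpace (P ^ k) ≤ colSpace S := by
    rw [← hSP]
    exact colSpace_mul_le_aux _ _
  have hcolS : colSpace S = colSpace (P ^ k) := by
    symm
    refine Submodule.eq_of_le_of_finrank_le hcolPk_le_S ?_
    rw [finrank_colSpace_aux, finrank_colSpace_aux]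
    calc S.rank ≤ X.rank := Matrix.rank_mul_le_left _ _
      _ = (P ^ k).rank := hX2
  -- S * P * S = S
  have hSPS : S * P * S = S := by
    apply mulVec_ext_aux
    intro v
    obtain ⟨u, hu⟩ : ∃ u, (P ^ k) *ᵥ u = S *ᵥ v :=
      mem_colSpace_aux.mp (hcolS ▸ mem_colSpace_aux.mpr ⟨v, rfl⟩)
    have h1 : (S * P * S) *ᵥ v = S *ᵥ (P *ᵥ (S *ᵥ v)) := by
      rw [Matrix.mulVec_mulVec, Matrix.mulVec_mulVec]
    rw [h1, ← hu, Matrix.mulVec_mulVec, Matrix.mulVec_mulVec, mul_assoc, ← pow_succ', hSP]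
  have hSPS' : S * (P * S) = S := by rw [← mul_assoc, hSPS]
  set Q : Matrix (Fin m) (Fin m) ℂ := P * S with hQ
  have hQidem : Q * Q = Q := by
    rw [hQ, mul_assoc, hSPS']
  -- col Q = col (P^k)
  have hcolQ : colSpace Q = colSpace (P ^ k) := by
    apply le_antisymm
    · intro x hx
      obtain ⟨v, rfl⟩ := mem_colSpace_aux.mp hx
      obtain ⟨u, hu⟩ : ∃ u, (P ^ k) *ᵥ u = S *ᵥ v :=
        mem_colSpace_aux.mp (hcolS ▸ mem_colSpace_aux.mpr ⟨v, rfl⟩)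
      have : Q *ᵥ v = (P ^ (k + 1)) *ᵥ u := by
        rw [hQ, ← Matrix.mulVec_mulVec, ← hu, Matrix.mulVec_mulVec, ← pow_succ']
      rw [this]
      exact hcolP1 ▸ mem_colSpace_aux.mpr ⟨u, rfl⟩
    · have hfac : Q * P ^ (k + 1) = P ^ (k + 1) := by
        rw [hQ, mul_assoc, hSP, ← pow_succ']
      have : colSpace (P ^ (k + 1)) ≤ colSpace Q := by
        rw [← hfac]
        exact colSpace_mul_le_aux _ _
      rw [hcolP1] at this
      exact this
  -- null Q = null S
  have hnullQ : nullSpace Q = nullSpace S := by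
    ext v
    rw [mem_nullSpace_aux, mem_nullSpace_aux]
    constructor
    · intro hv
      have : S *ᵥ v = (S * P * S) *ᵥ v := by rw [hSPS]
      rw [this, mul_assoc, ← hQ, ← Matrix.mulVec_mulVec, hv, Matrix.mulVec_zero]
    · intro hv
      rw [hQ, ← Matrix.mulVec_mulVec, hv, Matrix.mulVec_zero]
  -- B * Y₀ = Q
  have hBY0 : B * (H * B * W * X * W) = Q := by
    rw [hQ, hP, hS]
    simp only [← Matrix.mul_assoc, hH1]
  -- H * B * Y₀ = Y₀
  have hHBY0 : H * B * (H * B * W * X * W) = H * B * W * X * W := by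
    simp only [← Matrix.mul_assoc, hH2]
  -- Bᴴ * (B * H) = Bᴴ
  have h5 : Bᴴ * (B * H) = Bᴴ := by
    conv_rhs => rw [← hH1]
    rw [conjTranspose_mul, hH3]
  -- H * B * Bᴴ = Bᴴ
  have h6 : H * B * Bᴴ = Bᴴ := by
    calc H * B * Bᴴ = (H * B)ᴴ * Bᴴ := by rw [hH4]
      _ = Bᴴ * Hᴴ * Bᴴ := by rw [conjTranspose_mul]
      _ = Bᴴ * (Hᴴ * Bᴴ) := by rw [Matrix.mul_assoc]
      _ = Bᴴ * (B * H)ᴴ := by rw [conjTranspose_mul]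
      _ = Bᴴ * (B * H) := by rw [hH3]
      _ = Bᴴ := h5
  -- col Y₀ ≤ col Bᴴ
  have h7 : H * B = Bᴴ * Hᴴ := by rw [← hH4, conjTranspose_mul]
  have hY0col : colSpace (H * B * W * X * W) ≤ colSpace Bᴴ := by
    have heq : H * B * W * X * W = Bᴴ * (Hᴴ * W * X * W) := by
      rw [h7]
      simp only [Matrix.mul_assoc]
    rw [heq]
    exact colSpace_mul_le_aux _ _
  intro Y
  constructor
  · rintro ⟨hidem, hcol, hnull, hcolY⟩
    -- B * Y = Q
    have hBYQ : B * Y = Q := by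
      apply idem_eq_aux hidem hQidem
      · rw [hcol, hcolQ]
      · rw [hnull, hnullQ]
    -- H * B * Y = Y
    have hfix : H * B * Y = Y := by
      apply mulVec_ext_aux
      intro v
      obtain ⟨u, hu⟩ : ∃ u, Bᴴ *ᵥ u = Y *ᵥ v :=
        mem_colSpace_aux.mp (hcolY (mem_colSpace_aux.mpr ⟨v, rfl⟩))
      calc (H * B * Y) *ᵥ v = (H * B) *ᵥ (Y *ᵥ v) := by rw [Matrix.mulVec_mulVec]
        _ = (H * B) *ᵥ (Bᴴ *ᵥ u) := by rw [hu]
        _ = (H * B * Bᴴ) *ᵥ u := by rw [Matrix.mulVec_mulVec]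
        _ = Bᴴ *ᵥ u := by rw [h6]
        _ = Y *ᵥ v := hu
    calc Y = H * B * Y := hfix.symm
      _ = H * (B * Y) := by rw [Matrix.mul_assoc]
      _ = H * Q := by rw [hBYQ]
      _ = H * (B * (H * B * W * X * W)) := by rw [hBY0]
      _ = H * B * (H * B * W * X * W) := (Matrix.mul_assoc H B _).symm
      _ = H * B * W * X * W := hHBY0
  · rintro rfl
    refine ⟨?_, ?_, ?_, hY0col⟩
    · rw [hBY0]; exact hQidem
    · rw [hBY0]; exact hcolQ
    · rw [hBY0, hnullQ]
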